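/- arXiv:1210.5988 — 3 statements merged into one kernel-verified Lean document; each statement's English description precedes it below -/
import Mathlib

section
/- Let H be a Hilbert space and let E¹_μ and E²_μ (μ ∈ ℝ) be two generalized spectral families on H (i.e. monotone nondecreasing families of bounded self-adjoint operators with 0 ≤ E^k_μ ≤ I, E^k_{-∞} = 0). Define R_k(λ) = ∫_ℝ dE^k_μ/(μ−λ) for nonreal λ. If ‖R₁(iτ) − R₂(iτ)‖ = o(1/τ) as τ → +∞, then E¹_∞ = E²_∞, where E^k_∞ = strong limit of E^k_μ as μ → +∞. -/
open MeasureTheory Filter Topology ContinuousLinearMap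
open scoped ComplexInnerProductSpace

private lemma aux_ptwise (μ : ℝ) :
    Tendsto (fun τ : ℝ => Complex.I * τ * ((μ : ℂ) - Complex.I * τ)⁻¹) atTop (𝓝 (-1)) := by
  have h0 : Tendsto (fun τ : ℝ => (μ : ℂ) / (Complex.I * τ)) atTop (𝓝 0) := by
    apply squeeze_zero_norm' (a := fun τ : ℝ => |μ| / τ) ?_
      (tendsto_const_nhds.div_atTop tendsto_id)
    filter_upwards [eventually_gt_atTop (0:ℝ)] with τ hτ
    rw [norm_div, norm_mul, Complex.norm_I, one_mul, Complex.norm_real, Complex.norm_real]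
    simp [Real.norm_eq_abs, abs_of_pos hτ]
  have hc : ContinuousAt (fun z : ℂ => (z - 1)⁻¹) 0 := by
    apply ContinuousAt.inv₀ (by fun_prop)
    norm_num
  have H := hc.tendsto.comp h0
  simp only [Function.comp_def, zero_sub] at H
  rw [show ((-1 : ℂ))⁻¹ = -1 by norm_num] at H
  apply H.congr'
  filter_upwards [eventually_gt_atTop (0:ℝ)] with τ hτ
  have hne : Complex.I * τ ≠ 0 := by
    simp [Complex.ext_iff, hτ.ne']
  have hne2 : (μ : ℂ) - Complex.I * τ ≠ 0 := by
    intro h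
    have := congrArg Complex.im h
    simp [hτ.ne'] at this
  rw [div_sub_one hne, inv_div, div_eq_mul_inv]

private lemma aux_bound (τ μ : ℝ) : ‖Complex.I * τ * ((μ : ℂ) - Complex.I * τ)⁻¹‖ ≤ 1 := by
  rw [norm_mul, norm_inv, norm_mul, Complex.norm_I, one_mul, Complex.norm_real, Real.norm_eq_abs]
  rcases eq_or_ne ((μ : ℂ) - Complex.I * τ) 0 with h | h
  · simp [h]
  rw [mul_inv_le_iff₀ (norm_pos_iff.mpr h), one_mul]
  calc |τ| = |((μ : ℂ) - Complex.I * τ).im| := by simp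
    _ ≤ ‖(μ : ℂ) - Complex.I * τ‖ := Complex.abs_im_le_norm _

private lemma aux_int (m : Measure ℝ) [IsFiniteMeasure m] :
    Tendsto (fun τ : ℝ => Complex.I * τ * ∫ μ : ℝ, ((μ : ℂ) - Complex.I * τ)⁻¹ ∂m) atTop
      (𝓝 (-((m Set.univ).toReal : ℂ))) := by
  have key := tendsto_integral_filter_of_dominated_convergence (μ := m)
    (F := fun (τ : ℝ) (μ : ℝ) => Complex.I * τ * ((μ : ℂ) - Complex.I * τ)⁻¹)
    (f := fun _ => (-1 : ℂ)) (bound := fun _ => 1)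
    (Eventually.of_forall fun τ => Measurable.aestronglyMeasurable (by measurability))
    (Eventually.of_forall fun τ => ae_of_all _ fun μ => aux_bound τ μ)
    (integrable_const 1)
    (ae_of_all _ fun μ => aux_ptwise μ)
  have : ∫ (_ : ℝ), (-1 : ℂ) ∂m = -((m Set.univ).toReal : ℂ) := by
    rw [integral_const]; simp [measureReal_def]
  rw [this] at key
  apply key.congr
  intro τ
  rw [← integral_const_mul]

/-- If two generalized spectral families have Cauchy transforms (generalized
resolvents) whose difference is `o(1/τ)` along the imaginary axis, then their
strong limits at `+∞` coincide. -/
theorem stmt_0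
    {H : Type*} [NormedAddCommGroup H] [InnerProductSpace ℂ H] [CompleteSpace H]
    (E : Fin 2 → ℝ → H →L[ℂ] H)
    (hpos : ∀ k μ, (E k μ).IsPositive)
    (hle1 : ∀ k μ, ((1 : H →L[ℂ] H) - E k μ).IsPositive)
    (hmono : ∀ k, ∀ μ₁ μ₂ : ℝ, μ₁ ≤ μ₂ → (E k μ₂ - E k μ₁).IsPositive)
    (hbot : ∀ k (f : H), Tendsto (fun μ => E k μ f) atBot (nhds 0))
    (ν : Fin 2 → H → Measure ℝ)
    (hνfin : ∀ k f, IsFiniteMeasure (ν k f))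
    (hν : ∀ k (f : H) (μ : ℝ), ((ν k f) (Set.Iic μ)).toReal = (⟪f, E k μ f⟫).re)
    (R : Fin 2 → ℂ → H →L[ℂ] H)
    (hR : ∀ k (l : ℂ), l.im ≠ 0 → ∀ f : H,
      ⟪f, R k l f⟫ = ∫ μ : ℝ, ((μ : ℂ) - l)⁻¹ ∂(ν k f))
    (hsmall : ∀ ε > (0:ℝ), ∃ T : ℝ, ∀ τ ≥ T,
      τ * ‖R 0 (Complex.I * (τ : ℂ)) - R 1 (Complex.I * (τ : ℂ))‖ ≤ ε)
    (Einf : Fin 2 → H →L[ℂ] H)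
    (hEinf : ∀ k (f : H), Tendsto (fun μ => E k μ f) atTop (nhds (Einf k f))) :
    Einf 0 = Einf 1 := by
  -- ⟪f, E k μ f⟫ is real
  have hEreal : ∀ k (μ : ℝ) (f : H), (⟪f, E k μ f⟫).im = 0 := by
    intro k μ f
    have hsym := (hpos k μ).1
    have h1 : (starRingEnd ℂ) ⟪f, E k μ f⟫ = ⟪f, E k μ f⟫ := by
      rw [inner_conj_symm]
      simpa using hsym f f
    exact Complex.conj_eq_iff_im.mp h1
  -- ⟪f, Einf k f⟫ is real
  have hinner_tendsto : ∀ k (f : H),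
      Tendsto (fun μ : ℝ => (⟪f, E k μ f⟫ : ℂ)) atTop (𝓝 ⟪f, Einf k f⟫) :=
    fun k f => tendsto_const_nhds.inner (hEinf k f)
  have hInfreal : ∀ k (f : H), (⟪f, Einf k f⟫).im = 0 := by
    intro k f
    have h1 : Tendsto (fun μ : ℝ => (⟪f, E k μ f⟫ : ℂ).im) atTop (𝓝 ((⟪f, Einf k f⟫).im)) :=
      (Complex.continuous_im.tendsto _).comp (hinner_tendsto k f)
    have h2 : Tendsto (fun _ : ℝ => (0:ℝ)) atTop (𝓝 ((⟪f, Einf k f⟫).im)) :=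
      h1.congr fun μ => hEreal k μ f
    exact (tendsto_nhds_unique tendsto_const_nhds h2).symm
  -- total mass = re ⟪f, Einf k f⟫
  have hmass : ∀ k (f : H), ((ν k f) Set.univ).toReal = (⟪f, Einf k f⟫).re := by
    intro k f
    have := hνfin k f
    have h1 : Tendsto (fun μ : ℝ => ((ν k f) (Set.Iic μ)).toReal) atTop
        (𝓝 (((ν k f) Set.univ).toReal)) := by
      apply (ENNReal.tendsto_toReal (measure_ne_top _ _)).comp
      exact tendsto_measure_Iic_atTop _
    have h2 : Tendsto (fun μ : ℝ => (⟪f, E k μ f⟫ : ℂ).re) atTop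
        (𝓝 ((⟪f, Einf k f⟫).re)) :=
      (Complex.continuous_re.tendsto _).comp (hinner_tendsto k f)
    exact tendsto_nhds_unique (h1.congr fun μ => hν k f μ) h2
  -- key limit for each family
  have hkey : ∀ k (f : H),
      Tendsto (fun τ : ℝ => Complex.I * τ * ⟪f, R k (Complex.I * τ) f⟫) atTop
        (𝓝 (-(((ν k f) Set.univ).toReal : ℂ))) := by
    intro k f
    have := hνfin k f
    apply (aux_int (ν k f)).congr'
    filter_upwards [eventually_gt_atTop (0:ℝ)] with τ hτ
    rw [hR k (Complex.I * τ) (by simp [hτ.ne']) f]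
  -- difference tends to 0
  have hdiff0 : ∀ f : H,
      Tendsto (fun τ : ℝ => Complex.I * τ * ⟪f, R 0 (Complex.I * τ) f⟫
        - Complex.I * τ * ⟪f, R 1 (Complex.I * τ) f⟫) atTop (𝓝 0) := by
    intro f
    have hn : Tendsto (fun τ : ℝ =>
        (τ * ‖R 0 (Complex.I * (τ:ℂ)) - R 1 (Complex.I * (τ:ℂ))‖) * (‖f‖ * ‖f‖))
        atTop (𝓝 0) := by
      rw [show (0:ℝ) = 0 * (‖f‖ * ‖f‖) by ring]
      apply Tendsto.mul_const
      rw [Metric.tendsto_atTop]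
      intro ε hε
      obtain ⟨T, hT⟩ := hsmall (ε/2) (by positivity)
      refine ⟨max T 0, fun τ hτ => ?_⟩
      have h1 : τ ≥ T := le_trans (le_max_left _ _) hτ
      have h2 : (0:ℝ) ≤ τ := le_trans (le_max_right _ _) hτ
      rw [Real.dist_eq, sub_zero, abs_of_nonneg (by positivity)]
      exact lt_of_le_of_lt (hT τ h1) (by linarith)
    apply squeeze_zero_norm' ?_ hn
    filter_upwards [eventually_ge_atTop (0:ℝ)] with τ hτ
    have heq : Complex.I * τ * ⟪f, R 0 (Complex.I * τ) f⟫
        - Complex.I * τ * ⟪f, R 1 (Complex.I * τ) f⟫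
        = Complex.I * τ * ⟪f, (R 0 (Complex.I * τ) - R 1 (Complex.I * τ)) f⟫ := by
      rw [ContinuousLinearMap.sub_apply, inner_sub_right]; ring
    rw [heq, norm_mul, norm_mul, Complex.norm_I, one_mul, Complex.norm_real, Real.norm_eq_abs,
      abs_of_nonneg hτ, mul_assoc]
    gcongr
    calc ‖⟪f, (R 0 (Complex.I * τ) - R 1 (Complex.I * τ)) f⟫‖
        ≤ ‖f‖ * ‖(R 0 (Complex.I * τ) - R 1 (Complex.I * τ)) f‖ := norm_inner_le_norm _ _
      _ ≤ ‖f‖ * (‖R 0 (Complex.I * (τ:ℂ)) - R 1 (Complex.I * (τ:ℂ))‖ * ‖f‖) := by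
          gcongr; exact (R 0 (Complex.I * τ) - R 1 (Complex.I * τ)).le_opNorm f
      _ = ‖R 0 (Complex.I * (τ:ℂ)) - R 1 (Complex.I * (τ:ℂ))‖ * (‖f‖ * ‖f‖) := by ring
  -- equal masses
  have hre : ∀ f : H, (⟪f, Einf 0 f⟫).re = (⟪f, Einf 1 f⟫).re := by
    intro f
    have h1 := (hkey 0 f).sub (hkey 1 f)
    have h2 := tendsto_nhds_unique h1 (hdiff0 f)
    have h3 : -((((ν 0 f) Set.univ).toReal : ℂ)) = -((((ν 1 f) Set.univ).toReal : ℂ)) := by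
      have := sub_eq_zero.mp h2
      linear_combination this - ((((ν 1 f) Set.univ).toReal : ℂ)) * 2 * 0
    have h4 : ((ν 0 f) Set.univ).toReal = ((ν 1 f) Set.univ).toReal := by
      have := neg_inj.mp h3
      exact_mod_cast this
    rw [← hmass 0 f, ← hmass 1 f, h4]
  -- conclude via polarization
  have hz : ∀ f : H, ⟪f, (Einf 0 - Einf 1) f⟫ = 0 := by
    intro f
    rw [ContinuousLinearMap.sub_apply, inner_sub_right]
    apply Complex.ext
    · simp [hre f]
    · simp [hInfreal 0 f, hInfreal 1 f]
  have hcoe : ((Einf 0 - Einf 1 : H →L[ℂ] H) : H →ₗ[ℂ] H) = 0 := by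
    rw [← inner_map_self_eq_zero]
    intro x
    rw [ContinuousLinearMap.coe_coe, ← inner_conj_symm, hz x, map_zero]
  have : (Einf 0 - Einf 1 : H →L[ℂ] H) = 0 :=
    ContinuousLinearMap.coe_injective (by rw [hcoe]; rfl)
  exact sub_eq_zero.mp this
end

section
/- Let σ be a function of bounded variation on ℝ with values in ℝ (a signed Stieltjes measure of finite total variation). Suppose that for λ = iτ, τ → +∞, one has | −∫_Δ dσ(μ) + ∫_Δ μ dσ(μ)/(μ−λ) + ∫_{ℝ∖Δ} λ dσ(μ)/(μ−λ) | ≤ o(1) uniformly for all finite intervals Δ containing a fixed interval Δ(ε). Then ∫_ℝ dσ(μ) = 0. -/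
open MeasureTheory

lemma denom_norm_ge (μ τ : ℝ) (hτ : 0 < τ) : τ ≤ ‖(μ:ℂ) - Complex.I * (τ:ℂ)‖ := by
  have h : |((μ:ℂ) - Complex.I * (τ:ℂ)).im| ≤ ‖(μ:ℂ) - Complex.I * (τ:ℂ)‖ :=
    Complex.abs_im_le_norm _
  simpa [Complex.sub_im, Complex.mul_im, abs_of_pos hτ] using h

lemma frac_norm_le (μ τ : ℝ) (hτ : 0 < τ) :
    ‖(μ:ℂ) / ((μ:ℂ) - Complex.I * (τ:ℂ))‖ ≤ |μ| / τ := by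
  rw [norm_div, Complex.norm_real, Real.norm_eq_abs]
  exact div_le_div_of_nonneg_left (abs_nonneg μ) hτ (denom_norm_ge μ τ hτ)

lemma frac2_norm_le (μ τ : ℝ) (hτ : 0 < τ) :
    ‖(Complex.I * (τ:ℂ)) / ((μ:ℂ) - Complex.I * (τ:ℂ))‖ ≤ 1 := by
  rw [norm_div, div_le_one (lt_of_lt_of_le hτ (denom_norm_ge μ τ hτ))]
  have h : ‖Complex.I * (τ:ℂ)‖ = τ := by
    simp [abs_of_pos hτ]
  rw [h]; exact denom_norm_ge μ τ hτ

/-- Scalar core of the resolvent-comparison lemma: a signed Stieltjes measure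
`σ = ν₁ - ν₂` of finite total variation whose combined Cauchy-transform
expression is `o(1)` along `λ = iτ`, uniformly over large finite intervals,
has total mass zero: `∫_ℝ dσ = 0`. -/
theorem stmt_1
    (ν₁ ν₂ : Measure ℝ) [IsFiniteMeasure ν₁] [IsFiniteMeasure ν₂]
    (hsmall : ∀ ε > (0:ℝ), ∃ a b : ℝ, a ≤ b ∧
      ∀ δ > (0:ℝ), ∃ T : ℝ, ∀ τ ≥ T, ∀ a' b' : ℝ, a' ≤ a → b ≤ b' →
        ‖(-((∫ _μ in Set.Icc a' b', (1:ℂ) ∂ν₁) - (∫ _μ in Set.Icc a' b', (1:ℂ) ∂ν₂))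
          + ((∫ μ in Set.Icc a' b', (μ:ℂ) / ((μ:ℂ) - Complex.I * (τ:ℂ)) ∂ν₁)
             - (∫ μ in Set.Icc a' b', (μ:ℂ) / ((μ:ℂ) - Complex.I * (τ:ℂ)) ∂ν₂))
          + ((∫ μ in (Set.Icc a' b')ᶜ, (Complex.I * (τ:ℂ)) / ((μ:ℂ) - Complex.I * (τ:ℂ)) ∂ν₁)
             - (∫ μ in (Set.Icc a' b')ᶜ, (Complex.I * (τ:ℂ)) / ((μ:ℂ) - Complex.I * (τ:ℂ)) ∂ν₂)))‖
          ≤ δ) :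
    (ν₁ Set.univ).toReal = (ν₂ Set.univ).toReal := by
  set d : ℝ := (ν₁ Set.univ).toReal - (ν₂ Set.univ).toReal with hd
  suffices h : ∀ ε > (0:ℝ), |d| ≤ 4 * ε by
    have h0 : |d| ≤ 0 := by
      by_contra hc
      push_neg at hc
      have := h (|d| / 8) (by linarith)
      linarith
    have : d = 0 := abs_nonpos_iff.mp h0
    linarith [this]
  intro ε hε
  obtain ⟨a, b, hab, h1⟩ := hsmall ε hε
  obtain ⟨T, hT⟩ := h1 ε hε
  -- choose n large so that complement mass is small and Icc (-n) n ⊇ Icc a b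
  set ρ : Measure ℝ := ν₁ + ν₂ with hρ
  have hfin : IsFiniteMeasure ρ := by rw [hρ]; infer_instance
  have hiInter : ⋂ n : ℕ, (Set.Icc (-(n:ℝ)) (n:ℝ))ᶜ = ∅ := by
    ext x
    simp only [Set.mem_iInter, Set.mem_compl_iff, Set.mem_Icc, Set.mem_empty_iff_false,
      iff_false, not_forall, not_not, not_and, not_le]
    push_neg
    refine ⟨⌈|x|⌉₊, ?_, ?_⟩
    · linarith [Nat.le_ceil |x|, neg_abs_le x]
    · linarith [Nat.le_ceil |x|, le_abs_self x]
  have htend : Filter.Tendsto (fun n : ℕ => ρ ((Set.Icc (-(n:ℝ)) (n:ℝ))ᶜ))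
      Filter.atTop (nhds (ρ (⋂ n : ℕ, (Set.Icc (-(n:ℝ)) (n:ℝ))ᶜ))) := by
    apply tendsto_measure_iInter_atTop
    · intro n; exact (measurableSet_Icc.compl).nullMeasurableSet
    · intro m n hmn
      apply Set.compl_subset_compl.mpr
      exact Set.Icc_subset_Icc (by exact_mod_cast neg_le_neg (by exact_mod_cast hmn)) (by exact_mod_cast hmn)
    · exact ⟨0, measure_ne_top ρ _⟩
  rw [hiInter, measure_empty] at htend
  have hε' : (0:ENNReal) < ENNReal.ofReal ε := ENNReal.ofReal_pos.mpr hε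
  obtain ⟨N, hN⟩ := (ENNReal.tendsto_atTop_zero.mp htend) (ENNReal.ofReal ε) hε'
  set n : ℕ := max N (max ⌈|a|⌉₊ ⌈|b|⌉₊) with hn
  have hρn : ρ ((Set.Icc (-(n:ℝ)) (n:ℝ))ᶜ) ≤ ENNReal.ofReal ε := hN n (le_max_left _ _)
  have ha' : -(n:ℝ) ≤ a := by
    have h1 : (⌈|a|⌉₊ : ℝ) ≤ n := by
      exact_mod_cast le_trans (le_max_left _ _) (le_max_right N _)
    linarith [Nat.le_ceil |a|, neg_abs_le a]
  have hb' : b ≤ (n:ℝ) := by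
    have h1 : (⌈|b|⌉₊ : ℝ) ≤ n := by
      exact_mod_cast le_trans (le_max_right _ _) (le_max_right N _)
    linarith [Nat.le_ceil |b|, le_abs_self b]
  set S : Set ℝ := Set.Icc (-(n:ℝ)) (n:ℝ) with hS
  -- complement masses
  have hc1 : (ν₁ Sᶜ).toReal + (ν₂ Sᶜ).toReal ≤ ε := by
    have hadd : ν₁ Sᶜ + ν₂ Sᶜ = ρ Sᶜ := by rw [hρ]; simp [Measure.add_apply]
    have : (ρ Sᶜ).toReal ≤ ε := ENNReal.toReal_le_of_le_ofReal hε.le hρn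
    calc (ν₁ Sᶜ).toReal + (ν₂ Sᶜ).toReal
        = (ρ Sᶜ).toReal := by
          rw [← hadd, ENNReal.toReal_add (measure_ne_top _ _) (measure_ne_top _ _)]
      _ ≤ ε := this
  -- choose τ
  set M : ℝ := (n:ℝ) * ((ν₁ Set.univ).toReal + (ν₂ Set.univ).toReal) with hM
  have hMnn : 0 ≤ M := by
    apply mul_nonneg (Nat.cast_nonneg n)
    positivity
  set τ : ℝ := max T (max 1 (M / ε)) with hτdef
  have hτpos : (0:ℝ) < τ := lt_of_lt_of_le one_pos (le_trans (le_max_left 1 _) (le_max_right T _))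
  have hτT : T ≤ τ := le_max_left _ _
  have hτM : M / τ ≤ ε := by
    have h1 : M / ε ≤ τ := le_trans (le_max_right 1 _) (le_max_right T _)
    rw [div_le_iff₀ hτpos]
    calc M = (M / ε) * ε := by field_simp
      _ ≤ τ * ε := mul_le_mul_of_nonneg_right h1 hε.le
      _ = ε * τ := mul_comm _ _

  have hkey := hT τ hτT (-(n:ℝ)) (n:ℝ) ha' hb'
  -- rewrite constant integrals
  have hA1 : (∫ _μ in S, (1:ℂ) ∂ν₁) = ((ν₁ S).toReal : ℂ) := by
    rw [setIntegral_const]; simp; rfl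
  have hA2 : (∫ _μ in S, (1:ℂ) ∂ν₂) = ((ν₂ S).toReal : ℂ) := by
    rw [setIntegral_const]; simp; rfl
  -- bound the middle terms
  have hB : ∀ (ν : Measure ℝ) [IsFiniteMeasure ν],
      ‖∫ μ in S, (μ:ℂ) / ((μ:ℂ) - Complex.I * (τ:ℂ)) ∂ν‖ ≤ ((n:ℝ)/τ) * (ν Set.univ).toReal := by
    intro ν _
    calc ‖∫ μ in S, (μ:ℂ) / ((μ:ℂ) - Complex.I * (τ:ℂ)) ∂ν‖
        ≤ ((n:ℝ)/τ) * (ν S).toReal := by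
          apply norm_setIntegral_le_of_norm_le_const_ae' (measure_lt_top ν S)
          apply Filter.Eventually.of_forall
          intro x hx
          calc ‖(x:ℂ) / ((x:ℂ) - Complex.I * (τ:ℂ))‖ ≤ |x| / τ := frac_norm_le x τ hτpos
            _ ≤ (n:ℝ) / τ := by
                apply div_le_div_of_nonneg_right _ hτpos.le
                rw [abs_le]; exact ⟨hx.1, hx.2⟩
      _ ≤ ((n:ℝ)/τ) * (ν Set.univ).toReal := by
          apply mul_le_mul_of_nonneg_left _ (by positivity)
          exact ENNReal.toReal_mono (measure_ne_top ν _) (measure_mono (Set.subset_univ S))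
  -- bound the tail terms
  have hC : ∀ (ν : Measure ℝ) [IsFiniteMeasure ν],
      ‖∫ μ in Sᶜ, (Complex.I * (τ:ℂ)) / ((μ:ℂ) - Complex.I * (τ:ℂ)) ∂ν‖ ≤ (ν Sᶜ).toReal := by
    intro ν _
    have := norm_setIntegral_le_of_norm_le_const_ae' (μ := ν) (s := Sᶜ) (C := 1)
      (measure_lt_top ν Sᶜ)
      (f := fun μ : ℝ => (Complex.I * (τ:ℂ)) / ((μ:ℂ) - Complex.I * (τ:ℂ)))
      (Filter.Eventually.of_forall (fun x _ => frac2_norm_le x τ hτpos))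
    simpa [Measure.real] using this
  -- assemble
  have hB1 := hB ν₁
  have hB2 := hB ν₂
  have hC1 := hC ν₁
  have hC2 := hC ν₂
  set E1 : ℂ := ((∫ μ in S, (μ:ℂ) / ((μ:ℂ) - Complex.I * (τ:ℂ)) ∂ν₁)
             - (∫ μ in S, (μ:ℂ) / ((μ:ℂ) - Complex.I * (τ:ℂ)) ∂ν₂)) with hE1
  set E2 : ℂ := ((∫ μ in Sᶜ, (Complex.I * (τ:ℂ)) / ((μ:ℂ) - Complex.I * (τ:ℂ)) ∂ν₁)
             - (∫ μ in Sᶜ, (Complex.I * (τ:ℂ)) / ((μ:ℂ) - Complex.I * (τ:ℂ)) ∂ν₂)) with hE2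
  rw [hA1, hA2] at hkey
  have hE1n : ‖E1‖ ≤ ε := by
    calc ‖E1‖ ≤ ((n:ℝ)/τ) * (ν₁ Set.univ).toReal + ((n:ℝ)/τ) * (ν₂ Set.univ).toReal :=
        le_trans (norm_sub_le _ _) (add_le_add hB1 hB2)
      _ = M / τ := by rw [hM]; ring
      _ ≤ ε := hτM
  have hE2n : ‖E2‖ ≤ ε := by
    calc ‖E2‖ ≤ (ν₁ Sᶜ).toReal + (ν₂ Sᶜ).toReal := le_trans (norm_sub_le _ _) (add_le_add hC1 hC2)
      _ ≤ ε := hc1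
  -- the Icc-mass difference
  have hmain : |(ν₁ S).toReal - (ν₂ S).toReal| ≤ 3 * ε := by
    have heq : (((ν₁ S).toReal : ℂ) - ((ν₂ S).toReal : ℂ))
        = E1 + E2 - (-((((ν₁ S).toReal : ℂ)) - (((ν₂ S).toReal : ℂ))) + E1 + E2) := by ring
    have hnorm : ‖(((ν₁ S).toReal : ℂ) - ((ν₂ S).toReal : ℂ))‖ ≤ 3 * ε := by
      rw [heq]
      calc ‖E1 + E2 - (-((((ν₁ S).toReal : ℂ)) - (((ν₂ S).toReal : ℂ))) + E1 + E2)‖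
          ≤ ‖E1 + E2‖ + ‖-((((ν₁ S).toReal : ℂ)) - (((ν₂ S).toReal : ℂ))) + E1 + E2‖ :=
            norm_sub_le _ _
        _ ≤ (‖E1‖ + ‖E2‖) + ε := add_le_add (norm_add_le _ _) hkey
        _ ≤ 3 * ε := by linarith
    have : (((ν₁ S).toReal : ℂ) - ((ν₂ S).toReal : ℂ)) = (((ν₁ S).toReal - (ν₂ S).toReal : ℝ) : ℂ) := by
      push_cast; ring
    rw [this, Complex.norm_real, Real.norm_eq_abs] at hnorm
    exact hnorm
  -- relate to total masses
  have hsplit : ∀ (ν : Measure ℝ) [IsFiniteMeasure ν],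
      (ν Set.univ).toReal = (ν S).toReal + (ν Sᶜ).toReal := by
    intro ν _
    rw [← ENNReal.toReal_add (measure_ne_top _ _) (measure_ne_top _ _),
      measure_add_measure_compl measurableSet_Icc]
  rw [hd, hsplit ν₁, hsplit ν₂]
  have habs : |(ν₁ S).toReal + (ν₁ Sᶜ).toReal - ((ν₂ S).toReal + (ν₂ Sᶜ).toReal)|
      ≤ |(ν₁ S).toReal - (ν₂ S).toReal| + ((ν₁ Sᶜ).toReal + (ν₂ Sᶜ).toReal) := by
    have h2 : |(ν₁ Sᶜ).toReal - (ν₂ Sᶜ).toReal| ≤ (ν₁ Sᶜ).toReal + (ν₂ Sᶜ).toReal := by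
      rw [abs_le]
      constructor <;> [linarith [ENNReal.toReal_nonneg (a := ν₁ Sᶜ)];
        linarith [ENNReal.toReal_nonneg (a := ν₂ Sᶜ)]]
    calc |(ν₁ S).toReal + (ν₁ Sᶜ).toReal - ((ν₂ S).toReal + (ν₂ Sᶜ).toReal)|
        = |((ν₁ S).toReal - (ν₂ S).toReal) + ((ν₁ Sᶜ).toReal - (ν₂ Sᶜ).toReal)| := by ring_nf
      _ ≤ |(ν₁ S).toReal - (ν₂ S).toReal| + |(ν₁ Sᶜ).toReal - (ν₂ Sᶜ).toReal| := abs_add_le _ _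
      _ ≤ _ := by linarith
  linarith [habs, hmain, hc1]
end

section
/- Let Q be a bounded operator on a Hilbert space with Re Q = (Q + Q*)/2 boundedly invertible, and let X_λ(t) be the operator solution of the homogeneous canonical system (i/2)((Q(t)x)' + Q*(t)x') − H_λ(t)x = 0 with X_λ(0) = I, where H_λ(t)* = H_{λ̄}(t). Then for all t and all λ in the domain of analyticity, X_{λ̄}(t)* [Re Q(t)] X_λ(t) = G, where G = Re Q(0). -/
open ContinuousLinearMap

/-- Constancy of the sesquilinear invariant `X_{λ̄}(t)* (Re Q(t)) X_λ(t) = Re Q(0)`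
for the operator solution of the canonical system
`(i/2)((Q(t)x)' + Q*(t)x') − H_λ(t)x = 0`, `X_λ(0) = I`, where `H_λ(t)* = H_{λ̄}(t)`. -/
theorem stmt_7
    {H : Type*} [NormedAddCommGroup H] [InnerProductSpace ℂ H] [CompleteSpace H]
    (A : Set ℂ) (hAsym : ∀ l ∈ A, (starRingEnd ℂ) l ∈ A)
    (Q Q' : ℝ → H →L[ℂ] H)
    (hQderiv : ∀ t : ℝ, HasDerivAt Q (Q' t) t)
    (hQinv : ∀ t : ℝ, IsUnit (((1:ℂ)/2) • (Q t + ContinuousLinearMap.adjoint (Q t))))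
    (Hl : ℂ → ℝ → H →L[ℂ] H)
    (hHcont : ∀ l ∈ A, Continuous fun t => Hl l t)
    (hHsym : ∀ l ∈ A, ∀ t : ℝ, ContinuousLinearMap.adjoint (Hl l t) = Hl ((starRingEnd ℂ) l) t)
    (X X' : ℂ → ℝ → H →L[ℂ] H)
    (hXderiv : ∀ l ∈ A, ∀ t : ℝ, HasDerivAt (X l) (X' l t) t)
    (hX0 : ∀ l ∈ A, X l 0 = 1)
    (hode : ∀ l ∈ A, ∀ t : ℝ,
      (Complex.I / 2) • ((Q' t).comp (X l t) + (Q t).comp (X' l t)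
          + (ContinuousLinearMap.adjoint (Q t)).comp (X' l t))
        = (Hl l t).comp (X l t)) :
    ∀ l ∈ A, ∀ t : ℝ,
      (ContinuousLinearMap.adjoint (X ((starRingEnd ℂ) l) t)).comp
          (((((1:ℂ)/2) • (Q t + ContinuousLinearMap.adjoint (Q t)))).comp (X l t))
        = ((1:ℂ)/2) • (Q 0 + ContinuousLinearMap.adjoint (Q 0)) := by
  intro l hl t
  have hlb : (starRingEnd ℂ) l ∈ A := hAsym l hl
  set lb := (starRingEnd ℂ) l with hlbdef
  set R : ℝ → H →L[ℂ] H := fun s => ((1:ℂ)/2) • (Q s + star (Q s)) with hRdef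
  have hReq : ∀ s, R s = ((1:ℂ)/2) • (Q s + adjoint (Q s)) := by
    intro s; simp [hRdef, star_eq_adjoint]
  have hRderiv : ∀ s, HasDerivAt R (((1:ℂ)/2) • (Q' s + star (Q' s))) s := by
    intro s
    exact ((hQderiv s).add (hQderiv s).star).const_smul ((1:ℂ)/2)
  have hRstar : ∀ s, star (R s) = R s := by
    intro s
    simp only [hRdef, star_smul, star_add, star_star]
    rw [show star ((1:ℂ)/2) = (1:ℂ)/2 by norm_num, add_comm]
  -- key identity from the ODE
  have key : ∀ m ∈ A, ∀ s : ℝ, R s * X' m s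
      = (-Complex.I) • (Hl m s * X m s) - ((1:ℂ)/2) • (Q' s * X m s) := by
    intro m hm s
    have h := hode m hm s
    change (Complex.I / 2) • (Q' s * X m s + Q s * X' m s + adjoint (Q s) * X' m s)
        = Hl m s * X m s at h
    have h2 := congrArg (fun z => (-Complex.I) • z) h
    simp only [smul_smul] at h2
    rw [show (-Complex.I) * (Complex.I / 2) = (1:ℂ)/2 by
      have := Complex.I_mul_I; ring_nf; linear_combination (-(1:ℂ)/2) * Complex.I_mul_I] at h2
    rw [hReq, smul_mul_assoc, add_mul, ← h2]
    simp only [smul_add]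
    abel
  have keyb : ∀ s : ℝ, star (X' lb s) * R s
      = Complex.I • (star (X lb s) * Hl l s)
        - ((1:ℂ)/2) • (star (X lb s) * star (Q' s)) := by
    intro s
    have h := congrArg star (key lb hlb s)
    have hH : star (Hl lb s) = Hl l s := by
      rw [star_eq_adjoint, hHsym lb hlb s, hlbdef, Complex.conj_conj]
    simpa [star_mul, star_sub, star_smul, hRstar, hH,
      show star (-Complex.I) = Complex.I by simp,
      show star ((1:ℂ)/2) = (1:ℂ)/2 by norm_num] using h
  -- the invariant function
  set F : ℝ → H →L[ℂ] H := fun s => star (X lb s) * (R s * X l s) with hFdef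
  have hFderiv : ∀ s : ℝ, HasDerivAt F 0 s := by
    intro s
    have hXb : HasDerivAt (fun u => star (X lb u)) (star (X' lb s)) s :=
      (hXderiv lb hlb s).star
    have hRX : HasDerivAt (fun u => R u * X l u)
        (((1:ℂ)/2) • (Q' s + star (Q' s)) * X l s + R s * X' l s) s :=
      (hRderiv s).mul (hXderiv l hl s)
    have hF := hXb.mul hRX
    refine HasDerivAt.congr_deriv (f := F) hF ?_
    rw [mul_add, ← mul_assoc, keyb s, key l hl s]
    simp only [smul_mul_assoc, mul_smul_comm, sub_mul, add_mul, mul_add, mul_sub,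
      smul_add, smul_sub, mul_assoc, star_mul]
    module
  have hconst : F t = F 0 :=
    is_const_of_deriv_eq_zero (fun s => (hFderiv s).differentiableAt)
      (fun s => (hFderiv s).deriv) t 0
  have hF0 : F 0 = ((1:ℂ)/2) • (Q 0 + adjoint (Q 0)) := by
    simp [hFdef, hX0 l hl, hX0 lb hlb, hReq]
  calc (adjoint (X lb t)).comp
        ((((1:ℂ)/2) • (Q t + adjoint (Q t))).comp (X l t))
      = F t := by rw [hFdef]; simp only [star_eq_adjoint, hReq]; rfl
    _ = ((1:ℂ)/2) • (Q 0 + adjoint (Q 0)) := hconst.trans hF0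
end
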